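/- Let F : ℝ → ℝ be continuous and 1-periodic, and let p, λ ∈ ℝ. The equation |p + v'(y)| + F(y) = λ admits a continuous 1-periodic viscosity solution v if and only if λ = max{ max_{y ∈ [0,1]} F(y), |p| + ∫₀¹ F(y) dy }. -/

import Mathlib

open Set

open Filter Topology intervalIntegral

set_option maxHeartbeats 1600000

/-- If `g` has derivative `d` at `c` and `g x ≤ g c` just to the left, then `0 ≤ d`. -/
lemma nonneg_of_left_le {g : ℝ → ℝ} {d c : ℝ} (hg : HasDerivAt g d c)
    (h : ∀ᶠ x in 𝓝[<] c, g x ≤ g c) : 0 ≤ d := by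
  have hs : Tendsto (slope g c) (𝓝[<] c) (𝓝 d) :=
    (hasDerivAt_iff_tendsto_slope.1 hg).mono_left
      (nhdsWithin_mono c (fun x hx => ne_of_lt hx))
  refine ge_of_tendsto hs ?_
  filter_upwards [h, self_mem_nhdsWithin] with x hx hxc
  have hxc' : x < c := hxc
  rw [slope_def_field]
  exact div_nonneg_iff.2 (Or.inr ⟨by linarith, by linarith⟩)

/-- If `g` has derivative `d` at `c` and `g x ≤ g c` just to the right, then `d ≤ 0`. -/
lemma nonpos_of_right_le {g : ℝ → ℝ} {d c : ℝ} (hg : HasDerivAt g d c)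
    (h : ∀ᶠ x in 𝓝[>] c, g x ≤ g c) : d ≤ 0 := by
  have hs : Tendsto (slope g c) (𝓝[>] c) (𝓝 d) :=
    (hasDerivAt_iff_tendsto_slope.1 hg).mono_left
      (nhdsWithin_mono c (fun x hx => ne_of_gt hx))
  refine le_of_tendsto hs ?_
  filter_upwards [h, self_mem_nhdsWithin] with x hx hxc
  have hxc' : c < x := hxc
  rw [slope_def_field]
  exact div_nonpos_iff.2 (Or.inr ⟨by linarith, by linarith⟩)

/-- bounded coercive continuous functions attain a global max -/
lemma exists_global_max {f : ℝ → ℝ} (hf : Continuous f) (x₀ C : ℝ)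
    (hb : ∀ x, f x ≤ C - |x - x₀|) : ∃ x, ∀ y, f y ≤ f x := by
  refine hf.exists_forall_ge' x₀ ?_
  rw [Filter.eventually_iff, Filter.mem_cocompact]
  refine ⟨Icc (x₀ - (C - f x₀)) (x₀ + (C - f x₀)), isCompact_Icc, ?_⟩
  intro x hx
  simp only [mem_compl_iff, mem_Icc, not_and_or, not_le] at hx
  have : C - f x₀ ≤ |x - x₀| := by
    rcases hx with hx | hx
    · rw [abs_sub_comm]; calc C - f x₀ ≤ x₀ - x := by linarith
        _ ≤ |x₀ - x| := le_abs_self _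
    · calc C - f x₀ ≤ x - x₀ := by linarith
        _ ≤ |x - x₀| := le_abs_self _
  have := hb x
  simp only [mem_setOf_eq]
  linarith

/-- continuous periodic functions are bounded -/
lemma periodic_bound {v : ℝ → ℝ} (hc : Continuous v) (hp : Function.Periodic v 1) :
    ∃ C : ℝ, 0 ≤ C ∧ ∀ y, |v y| ≤ C := by
  obtain ⟨C, hC⟩ := (isCompact_Icc (a := (0:ℝ)) (b := 1)).exists_bound_of_continuousOn
    hc.continuousOn
  refine ⟨C, le_trans (abs_nonneg _) (hC 0 (by norm_num)), fun y => ?_⟩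
  have h1 : v (y - (⌊y⌋ : ℝ) * 1) = v y := hp.sub_int_mul_eq ⌊y⌋
  have h2 : v (Int.fract y) = v y := by
    rw [← Int.self_sub_floor]; simpa [mul_one] using h1
  rw [← h2]
  exact hC _ ⟨Int.fract_nonneg y, le_of_lt (Int.fract_lt_one y)⟩

noncomputable def qp : ℝ → ℝ := fun x => (max x 0)^2

lemma qp_nonneg (x : ℝ) : 0 ≤ qp x := sq_nonneg _

lemma qp_of_nonpos {x : ℝ} (h : x ≤ 0) : qp x = 0 := by
  simp [qp, max_eq_right h]

lemma qp_of_nonneg {x : ℝ} (h : 0 ≤ x) : qp x = x^2 := by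
  simp [qp, max_eq_left h]

lemma qp_lb (x : ℝ) : 2*x - 1 ≤ qp x := by
  rcases le_or_gt x 0 with h | h
  · rw [qp_of_nonpos h]; linarith
  · rw [qp_of_nonneg h.le]; nlinarith [sq_nonneg (x-1)]

lemma qp_hasDerivAt (x : ℝ) : HasDerivAt qp (2 * max x 0) x := by
  rcases lt_trichotomy x 0 with h | h | h
  · have : qp =ᶠ[𝓝 x] fun _ => (0:ℝ) := by
      filter_upwards [Iio_mem_nhds h] with y hy
      exact qp_of_nonpos (le_of_lt hy)
    have h0 : HasDerivAt (fun _ : ℝ => (0:ℝ)) 0 x := hasDerivAt_const x 0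
    have := h0.congr_of_eventuallyEq this
    simpa [max_eq_right h.le] using this
  · subst h
    rw [hasDerivAt_iff_tendsto_slope]
    simp only [max_self, mul_zero]
    have hb : ∀ᶠ y in 𝓝[≠] (0:ℝ), ‖slope qp 0 y‖ ≤ |y| := by
      filter_upwards [self_mem_nhdsWithin] with y hy
      have hy0 : y ≠ 0 := hy
      rw [slope_def_field]
      have hq0 : qp 0 = 0 := qp_of_nonpos le_rfl
      rcases le_or_gt y 0 with h | h
      · simp [qp_of_nonpos h, hq0, abs_nonneg]
      · rw [qp_of_nonneg h.le, hq0]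
        have : (y^2 - 0) / (y - 0) = y := by field_simp; ring
        rw [this, Real.norm_eq_abs]
    have habs : Tendsto (fun y : ℝ => |y|) (𝓝[≠] (0:ℝ)) (𝓝 0) := by
      have : Tendsto (fun y : ℝ => |y|) (𝓝 (0:ℝ)) (𝓝 0) := by
        simpa using continuous_abs.tendsto (0:ℝ)
      exact this.mono_left nhdsWithin_le_nhds
    exact squeeze_zero_norm' hb habs
  · have : qp =ᶠ[𝓝 x] fun y => y^2 := by
      filter_upwards [Ioi_mem_nhds h] with y hy
      exact qp_of_nonneg (le_of_lt hy)
    have h0 : HasDerivAt (fun y : ℝ => y^2) (2*x) x := by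
      simpa using (hasDerivAt_pow 2 x)
    have := h0.congr_of_eventuallyEq this
    simpa [max_eq_left h.le] using this

lemma qp_contDiff : ContDiff ℝ 1 qp := by
  rw [contDiff_one_iff_deriv]
  constructor
  · exact fun x => (qp_hasDerivAt x).differentiableAt
  · have : deriv qp = fun x => 2 * max x 0 := funext fun x => (qp_hasDerivAt x).deriv
    rw [this]
    exact continuous_const.mul (continuous_id.max continuous_const)

/-- Core monotone lemma: a viscosity subsolution of `w' ≤ g` satisfies the integral bound. -/
lemma visc_upper {w g : ℝ → ℝ} (hw : Continuous w) (hg : Continuous g)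
    {Cw : ℝ} (hCw : ∀ y, |w y| ≤ Cw) {Cg : ℝ} (hCg : ∀ y, |g y| ≤ Cg)
    (H : ∀ φ : ℝ → ℝ, ContDiff ℝ 1 φ → ∀ y₀ : ℝ,
      IsLocalMax (fun y => w y - φ y) y₀ → deriv φ y₀ ≤ g y₀)
    {a b : ℝ} (hab : a ≤ b) : w b - w a ≤ ∫ y in a..b, g y := by
  rcases eq_or_lt_of_le hab with rfl | hab'
  · simp
  by_contra hcon
  push_neg at hcon
  have hCw0 : 0 ≤ Cw := le_trans (abs_nonneg _) (hCw 0)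
  have hCg0 : 0 ≤ Cg := le_trans (abs_nonneg _) (hCg 0)
  set I : ℝ := ∫ y in a..b, g y with hI
  obtain ⟨K, hK⟩ : ∃ K : ℝ, K = (w b - w a - I) / (b - a) := ⟨_, rfl⟩
  have hKpos : 0 < K := by rw [hK]; exact div_pos (by linarith) (by linarith)
  have hKba : K * (b - a) = w b - w a - I := by
    rw [hK]; exact div_mul_cancel₀ _ (ne_of_gt (by linarith))
  obtain ⟨D, hD⟩ : ∃ D : ℝ, D = Cg + K/2 + 1 := ⟨_, rfl⟩
  have hD1 : 1 ≤ D := by rw [hD]; linarith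
  set G : ℝ → ℝ := fun y => ∫ t in a..y, g t with hGdef
  have hGd : ∀ y, HasDerivAt G (g y) y := fun y => (hg.integral_hasStrictDerivAt a y).hasDerivAt
  have hGcont : Continuous G :=
    (Differentiable.continuous (fun y => (hGd y).differentiableAt))
  have hGb : ∀ y, |G y| ≤ Cg * |y - a| := by
    intro y
    have := intervalIntegral.norm_integral_le_of_norm_le_const
      (a := a) (b := y) (C := Cg) (f := g) (fun x _ => by simpa using hCg x)
    simpa [Real.norm_eq_abs] using this
  obtain ⟨c, hc⟩ : ∃ c : ℕ → ℝ, c = fun n : ℕ => ((n : ℝ)+1) * D := ⟨_, rfl⟩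
  have hcD : ∀ n, D ≤ c n := by
    intro n
    rw [hc]
    simp only []
    nlinarith [Nat.cast_nonneg (α := ℝ) n]
  have hcpos : ∀ n, 0 < c n := fun n => lt_of_lt_of_le (by linarith) (hcD n)
  obtain ⟨φ, hφ⟩ : ∃ φ : ℕ → ℝ → ℝ,
      φ = fun n y => G y + K/2 * (y - a) + c n * (qp (y - b) + qp (a - y)) := ⟨_, rfl⟩
  have hφd : ∀ n y, HasDerivAt (φ n)
      (g y + K/2 + c n * (2 * max (y-b) 0 - 2 * max (a-y) 0)) y := by
    intro n y
    have h1 : HasDerivAt (fun y => qp (y - b)) (2 * max (y - b) 0) y := by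
      have := (qp_hasDerivAt (y - b)).comp y ((hasDerivAt_id y).sub_const b)
      simpa [Function.comp_def] using this
    have h2 : HasDerivAt (fun y => qp (a - y)) (-(2 * max (a - y) 0)) y := by
      have := (qp_hasDerivAt (a - y)).comp y ((hasDerivAt_const y a).sub (hasDerivAt_id y))
      simpa [Function.comp_def] using this
    have h3 : HasDerivAt (fun y : ℝ => K/2 * (y - a)) (K/2) y := by
      simpa using (((hasDerivAt_id y).sub_const a).const_mul (K/2))
    have := ((hGd y).add h3).add ((h1.add h2).const_mul (c n))
    rw [hφ]
    exact this.congr_deriv (by ring)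
  have hφc : ∀ n, ContDiff ℝ 1 (φ n) := by
    intro n
    have hGc : ContDiff ℝ 1 G := by
      rw [contDiff_one_iff_deriv]
      refine ⟨fun y => (hGd y).differentiableAt, ?_⟩
      have : deriv G = g := funext fun y => (hGd y).deriv
      rw [this]; exact hg
    have hq1 : ContDiff ℝ 1 (fun y : ℝ => qp (y - b)) :=
      qp_contDiff.comp (contDiff_id.sub contDiff_const)
    have hq2 : ContDiff ℝ 1 (fun y : ℝ => qp (a - y)) :=
      qp_contDiff.comp (contDiff_const.sub contDiff_id)
    rw [hφ]
    exact (hGc.add (contDiff_const.mul (contDiff_id.sub contDiff_const))).add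
      (contDiff_const.mul (hq1.add hq2))
  -- existence of global max points
  have hpen : ∀ z : ℝ, 2*|z - a| - (2*(b-a)+1) ≤ qp (z - b) + qp (a - z) := by
    intro z
    rcases le_or_gt a z with h | h
    · have := qp_lb (z - b)
      have h2 := qp_nonneg (a - z)
      rw [abs_of_nonneg (by linarith : (0:ℝ) ≤ z - a)]
      linarith
    · have := qp_lb (a - z)
      have h2 := qp_nonneg (z - b)
      rw [abs_of_nonpos (by linarith : z - a ≤ 0)]
      linarith
  have hex : ∀ n : ℕ, ∃ x, ∀ z, w z - φ n z ≤ w x - φ n x := by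
    intro n
    refine exists_global_max (hw.sub ?_) a (Cw + c n * (2*(b-a)+1)) ?_
    · exact ((hφc n).continuous)
    · intro z
      have h1 := hCw z
      have h2 := hGb z
      have h3 := hpen z
      have h4 : |G z| ≤ Cg * |z - a| := h2
      have habs : |w z| ≤ Cw := h1
      have hKz : K/2 * (z - a) ≥ -(K/2 * |z - a|) := by
        have : z - a ≥ -|z - a| := neg_abs_le _
        nlinarith [hKpos]
      have hGz : G z ≥ -(Cg * |z - a|) := by
        have := neg_abs_le (G z); linarith
      have hcn := hcpos n
      have hDc := hcD n
      have hpen' : c n * (2*|z - a|) - c n * (2*(b-a)+1) ≤ c n * (qp (z - b) + qp (a - z)) := by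
        have h' := mul_le_mul_of_nonneg_left h3 hcn.le
        nlinarith [h']
      have hwz : w z ≤ Cw := le_trans (le_abs_self _) habs
      have key : w z - φ n z ≤ Cw + Cg * |z - a| + K/2 * |z - a|
          - c n * (2*|z - a|) + c n * (2*(b-a)+1) := by
        rw [hφ]
        simp only []
        linarith
      have habs0 : 0 ≤ |z - a| := abs_nonneg _
      have hco : Cg + K/2 - 2 * c n ≤ -1 := by linarith
      have h2c := mul_le_mul_of_nonneg_right hco habs0
      nlinarith [key, h2c]
  choose y hy using hex
  -- the max point is to the left of a
  have hya : ∀ n, y n < a := by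
    intro n
    by_contra hge
    push_neg at hge
    have hmax : IsLocalMax (fun z => w z - φ n z) (y n) :=
      Filter.Eventually.of_forall (hy n)
    have hH := H (φ n) (hφc n) (y n) hmax
    rw [(hφd n (y n)).deriv] at hH
    have h0 : max (a - y n) 0 = 0 := max_eq_right (by linarith)
    have h1 : (0:ℝ) ≤ max (y n - b) 0 := le_max_right _ _
    rw [h0] at hH
    nlinarith [hcpos n]
  obtain ⟨s, hs⟩ : ∃ s : ℕ → ℝ, s = fun n => a - y n := ⟨_, rfl⟩
  have hspos : ∀ n, 0 < s n := fun n => by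
    rw [hs]; simp only []; linarith [hya n]
  -- value comparison at b
  have hφb : ∀ n, φ n b = I + K/2 * (b - a) := by
    intro n
    rw [hφ]
    simp only []
    rw [qp_of_nonpos (by linarith : b - b ≤ 0), qp_of_nonpos (by linarith : a - b ≤ 0)]
    simp [hGdef, hI]
  have hval : ∀ n, w a + K/2*(b-a) + c n * (s n)^2 ≤ w (y n) - G (y n) + K/2 * s n := by
    intro n
    have h := hy n b
    rw [hφb n] at h
    have hwb : w b - (I + K/2 * (b-a)) = w a + K/2 * (b - a) := by
      have := hKba; linarith
    rw [hwb] at h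
    have hφy : φ n (y n) = G (y n) + K/2 * (y n - a) + c n * (qp (y n - b) + (s n)^2) := by
      rw [hφ, hs]
      simp only []
      rw [qp_of_nonneg (by linarith [hya n] : (0:ℝ) ≤ a - y n)]
    rw [hφy] at h
    have hqy : (0:ℝ) ≤ qp (y n - b) := qp_nonneg _
    have hcn := hcpos n
    have hsn : s n = a - y n := by rw [hs]
    have hmul : c n * (qp (y n - b) + (s n)^2) ≥ c n * (s n)^2 := by nlinarith
    nlinarith
  -- s n is bounded and tends to zero
  have hkey : ∀ n, c n * (s n)^2 ≤ 2*Cw + D * s n := by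
    intro n
    have h := hval n
    have h1 := hCw (y n)
    have h2 := hGb (y n)
    have h3 : |y n - a| = s n := by
      rw [hs]; simp only []
      rw [abs_of_nonpos (by linarith [hya n] : y n - a ≤ 0)]
      ring
    rw [h3] at h2
    have h4 : w (y n) ≤ Cw := le_trans (le_abs_self _) h1
    have h5 : -G (y n) ≤ Cg * s n := by
      have := neg_abs_le (G (y n)); linarith
    have h6 : -(w a) ≤ Cw := by have := neg_abs_le (w a); linarith [hCw a]
    have h7 : 0 < K/2 * (b - a) := by nlinarith
    have hDs : D * s n = Cg * s n + K/2 * s n + s n := by rw [hD]; ring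
    have hsp := (hspos n).le
    linarith
  have hsbd : ∀ n, s n ≤ 2*Cw + 2 := by
    intro n
    by_contra hgt
    push_neg at hgt
    have h := hkey n
    have hc1 : D ≤ c n := hcD n
    have hsp := hspos n
    have h2 : D * (s n)^2 ≤ c n * (s n)^2 :=
      mul_le_mul_of_nonneg_right hc1 (sq_nonneg _)
    have h3 : (s n)^2 ≤ 2*Cw + s n := by
      have hD0 : 0 < D := by linarith
      nlinarith
    nlinarith
  have hstend : Tendsto s atTop (𝓝 0) := by
    obtain ⟨E, hE⟩ : ∃ E : ℝ, E = 2*Cw + D * (2*Cw + 2) := ⟨_, rfl⟩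
    have hE0 : 0 ≤ E := by rw [hE]; nlinarith
    have hsq : ∀ n, (s n)^2 ≤ E / ((n:ℝ)+1) := by
      intro n
      have h := hkey n
      have h2 : D * s n ≤ D * (2*Cw+2) := mul_le_mul_of_nonneg_left (hsbd n) (by linarith)
      have h3 : ((n:ℝ)+1) * D * (s n)^2 ≤ E := by
        rw [hc] at h
        rw [hE]
        simp only [] at h
        linarith
      have hn1 : (0:ℝ) < (n:ℝ)+1 := by positivity
      rw [le_div_iff₀ hn1]
      have h4 : ((n:ℝ)+1) * (s n)^2 * 1 ≤ ((n:ℝ)+1) * (s n)^2 * D :=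
        mul_le_mul_of_nonneg_left hD1 (by positivity)
      calc (s n)^2 * ((n:ℝ)+1) = ((n:ℝ)+1) * (s n)^2 * 1 := by ring
        _ ≤ ((n:ℝ)+1) * (s n)^2 * D := h4
        _ = ((n:ℝ)+1) * D * (s n)^2 := by ring
        _ ≤ E := h3
    have hlim : Tendsto (fun n : ℕ => Real.sqrt (E / ((n:ℝ)+1))) atTop (𝓝 0) := by
      have hnat : Tendsto (fun n : ℕ => ((n:ℝ)+1)) atTop atTop :=
        tendsto_atTop_add_const_right _ 1 tendsto_natCast_atTop_atTop
      have h1 : Tendsto (fun n : ℕ => E / ((n:ℝ)+1)) atTop (𝓝 0) :=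
        Tendsto.div_atTop tendsto_const_nhds hnat
      have := (Real.continuous_sqrt.tendsto' 0 0 Real.sqrt_zero).comp h1
      exact this
    refine squeeze_zero (fun n => (hspos n).le) (fun n => ?_) hlim
    calc s n = Real.sqrt ((s n)^2) := (Real.sqrt_sq (hspos n).le).symm
      _ ≤ Real.sqrt (E/((n:ℝ)+1)) := Real.sqrt_le_sqrt (hsq n)
  -- limit contradiction
  have hytend : Tendsto y atTop (𝓝 a) := by
    have h0 : Tendsto (fun n => a - s n) atTop (𝓝 (a - 0)) :=
      tendsto_const_nhds.sub hstend
    rw [hs] at h0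
    simpa using h0
  have hutend : Tendsto (fun n => w (y n) - G (y n) + K/2 * s n) atTop (𝓝 (w a)) := by
    have h1 : Tendsto (fun n => w (y n)) atTop (𝓝 (w a)) :=
      (hw.tendsto a).comp hytend
    have h2 : Tendsto (fun n => G (y n)) atTop (𝓝 (G a)) :=
      (hGcont.tendsto a).comp hytend
    have hGa : G a = 0 := by simp [hGdef]
    have h3 : Tendsto (fun n => K/2 * s n) atTop (𝓝 0) := by
      simpa using hstend.const_mul (K/2)
    have := (h1.sub h2).add h3
    rw [hGa] at this
    simpa using this
  have hfin : w a + K/2*(b-a) ≤ w a := by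
    refine ge_of_tendsto hutend (Filter.Eventually.of_forall (fun n => ?_))
    have := hval n
    nlinarith [hcpos n, sq_nonneg (s n)]
  nlinarith

/-- reflected version: lower bound from tests at local maxima -/
lemma visc_upper' {w g : ℝ → ℝ} (hw : Continuous w) (hg : Continuous g)
    {Cw : ℝ} (hCw : ∀ y, |w y| ≤ Cw) {Cg : ℝ} (hCg : ∀ y, |g y| ≤ Cg)
    (H : ∀ φ : ℝ → ℝ, ContDiff ℝ 1 φ → ∀ y₀ : ℝ,
      IsLocalMax (fun y => w y - φ y) y₀ → g y₀ ≤ deriv φ y₀)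
    {a b : ℝ} (hab : a ≤ b) : (∫ y in a..b, g y) ≤ w b - w a := by
  have hw' : Continuous (fun y : ℝ => w (-y)) := hw.comp continuous_neg
  have hg' : Continuous (fun y : ℝ => -(g (-y))) := (hg.comp continuous_neg).neg
  have hCw' : ∀ y, |(fun y : ℝ => w (-y)) y| ≤ Cw := fun y => hCw (-y)
  have hCg' : ∀ y, |(fun y : ℝ => -(g (-y))) y| ≤ Cg := fun y => by
    simpa [abs_neg] using hCg (-y)
  have H' : ∀ ψ : ℝ → ℝ, ContDiff ℝ 1 ψ → ∀ y₀ : ℝ,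
      IsLocalMax (fun y => (fun y : ℝ => w (-y)) y - ψ y) y₀ →
      deriv ψ y₀ ≤ (fun y : ℝ => -(g (-y))) y₀ := by
    intro ψ hψ y₀ hmax
    have hφc : ContDiff ℝ 1 (fun x : ℝ => ψ (-x)) := hψ.comp contDiff_neg
    have hneg : Tendsto (fun x : ℝ => -x) (𝓝 (-y₀)) (𝓝 y₀) := by
      simpa using continuous_neg.tendsto (-y₀)
    have hmax' : IsLocalMax (fun x => w x - ψ (-x)) (-y₀) := by
      have h0 : ∀ᶠ x in 𝓝 (-y₀), w (-(-x)) - ψ (-x) ≤ w (-y₀) - ψ y₀ :=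
        hneg.eventually hmax
      filter_upwards [h0] with x hx
      simpa [neg_neg] using hx
    have hψd : HasDerivAt ψ (deriv ψ y₀) y₀ := ((hψ.differentiable one_ne_zero) y₀).hasDerivAt
    have hφd : HasDerivAt (fun x : ℝ => ψ (-x)) (deriv ψ y₀ * (-1)) (-y₀) :=
      HasDerivAt.comp _ (by rw [neg_neg]; exact hψd) (hasDerivAt_neg _)
    have hH := H (fun x : ℝ => ψ (-x)) hφc (-y₀) hmax'
    rw [hφd.deriv] at hH
    simp only []
    linarith
  have := visc_upper hw' hg' hCw' hCg' H' (neg_le_neg hab : -b ≤ -a)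
  have hint : (∫ y in (-b)..(-a), -(g (-y))) = -∫ y in a..b, g y := by
    rw [intervalIntegral.integral_neg]
    congr 1
    rw [intervalIntegral.integral_comp_neg (a := -b) (b := -a) (f := g)]
    simp
  rw [hint] at this
  simp only [neg_neg] at this
  linarith

/-- min version, lower bound -/
lemma visc_min_lower {w g : ℝ → ℝ} (hw : Continuous w) (hg : Continuous g)
    {Cw : ℝ} (hCw : ∀ y, |w y| ≤ Cw) {Cg : ℝ} (hCg : ∀ y, |g y| ≤ Cg)
    (H : ∀ φ : ℝ → ℝ, ContDiff ℝ 1 φ → ∀ y₀ : ℝ,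
      IsLocalMin (fun y => w y - φ y) y₀ → g y₀ ≤ deriv φ y₀)
    {a b : ℝ} (hab : a ≤ b) : (∫ y in a..b, g y) ≤ w b - w a := by
  have hw' : Continuous (fun y : ℝ => -(w y)) := hw.neg
  have hg' : Continuous (fun y : ℝ => -(g y)) := hg.neg
  have hCw' : ∀ y, |(fun y : ℝ => -(w y)) y| ≤ Cw := fun y => by
    simpa [abs_neg] using hCw y
  have hCg' : ∀ y, |(fun y : ℝ => -(g y)) y| ≤ Cg := fun y => by
    simpa [abs_neg] using hCg y
  have H' : ∀ ψ : ℝ → ℝ, ContDiff ℝ 1 ψ → ∀ y₀ : ℝ,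
      IsLocalMax (fun y => (fun y : ℝ => -(w y)) y - ψ y) y₀ →
      deriv ψ y₀ ≤ (fun y : ℝ => -(g y)) y₀ := by
    intro ψ hψ y₀ hmax
    have hφc : ContDiff ℝ 1 (fun x : ℝ => -(ψ x)) := hψ.neg
    have hmin : IsLocalMin (fun y => w y - (fun x : ℝ => -(ψ x)) y) y₀ := by
      have h0 := hmax.neg
      have heq : (fun y => -((fun y : ℝ => -(w y)) y - ψ y))
          = fun y => w y - (fun x : ℝ => -(ψ x)) y := by
        funext t; simp; ring
      rwa [heq] at h0
    have hψd : HasDerivAt ψ (deriv ψ y₀) y₀ := ((hψ.differentiable one_ne_zero) y₀).hasDerivAt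
    have hφd : HasDerivAt (fun x : ℝ => -(ψ x)) (-(deriv ψ y₀)) y₀ := hψd.neg
    have hH := H (fun x : ℝ => -(ψ x)) hφc y₀ hmin
    rw [hφd.deriv] at hH
    simp only []
    linarith
  have := visc_upper hw' hg' hCw' hCg' H' hab
  have hint : (∫ y in a..b, -(g y)) = -∫ y in a..b, g y := intervalIntegral.integral_neg
  rw [hint] at this
  linarith

/-- min version, upper bound -/
lemma visc_min_upper {w g : ℝ → ℝ} (hw : Continuous w) (hg : Continuous g)
    {Cw : ℝ} (hCw : ∀ y, |w y| ≤ Cw) {Cg : ℝ} (hCg : ∀ y, |g y| ≤ Cg)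
    (H : ∀ φ : ℝ → ℝ, ContDiff ℝ 1 φ → ∀ y₀ : ℝ,
      IsLocalMin (fun y => w y - φ y) y₀ → deriv φ y₀ ≤ g y₀)
    {a b : ℝ} (hab : a ≤ b) : w b - w a ≤ ∫ y in a..b, g y := by
  have hw' : Continuous (fun y : ℝ => -(w y)) := hw.neg
  have hg' : Continuous (fun y : ℝ => -(g y)) := hg.neg
  have hCw' : ∀ y, |(fun y : ℝ => -(w y)) y| ≤ Cw := fun y => by
    simpa [abs_neg] using hCw y
  have hCg' : ∀ y, |(fun y : ℝ => -(g y)) y| ≤ Cg := fun y => by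
    simpa [abs_neg] using hCg y
  have H' : ∀ ψ : ℝ → ℝ, ContDiff ℝ 1 ψ → ∀ y₀ : ℝ,
      IsLocalMax (fun y => (fun y : ℝ => -(w y)) y - ψ y) y₀ →
      (fun y : ℝ => -(g y)) y₀ ≤ deriv ψ y₀ := by
    intro ψ hψ y₀ hmax
    have hφc : ContDiff ℝ 1 (fun x : ℝ => -(ψ x)) := hψ.neg
    have hmin : IsLocalMin (fun y => w y - (fun x : ℝ => -(ψ x)) y) y₀ := by
      have h0 := hmax.neg
      have heq : (fun y => -((fun y : ℝ => -(w y)) y - ψ y))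
          = fun y => w y - (fun x : ℝ => -(ψ x)) y := by
        funext t; simp; ring
      rwa [heq] at h0
    have hψd : HasDerivAt ψ (deriv ψ y₀) y₀ := ((hψ.differentiable one_ne_zero) y₀).hasDerivAt
    have hφd : HasDerivAt (fun x : ℝ => -(ψ x)) (-(deriv ψ y₀)) y₀ := hψd.neg
    have hH := H (fun x : ℝ => -(ψ x)) hφc y₀ hmin
    rw [hφd.deriv] at hH
    simp only []
    linarith
  have := visc_upper' hw' hg' hCw' hCg' H' hab
  have hint : (∫ y in a..b, -(g y)) = -∫ y in a..b, g y := intervalIntegral.integral_neg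
  rw [hint] at this
  linarith


/-- A continuous 1-periodic `v : ℝ → ℝ` is a viscosity solution of
`|p + v'(y)| + F(y) = λ` on `ℝ`: for every `C¹` test function `φ`,
`|p + φ'(y₀)| + F(y₀) ≤ λ` at local maxima of `v − φ` and
`|p + φ'(y₀)| + F(y₀) ≥ λ` at local minima of `v − φ`. -/
def IsPeriodicCellSolution (F : ℝ → ℝ) (p lam : ℝ) (v : ℝ → ℝ) : Prop :=
  ∀ φ : ℝ → ℝ, ContDiff ℝ 1 φ →
    (∀ y₀ : ℝ, IsLocalMax (fun y => v y - φ y) y₀ → |p + deriv φ y₀| + F y₀ ≤ lam) ∧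
    (∀ y₀ : ℝ, IsLocalMin (fun y => v y - φ y) y₀ → lam ≤ |p + deriv φ y₀| + F y₀)

lemma test_deriv_eq_max {v φ : ℝ → ℝ} {d y : ℝ} (hv : HasDerivAt v d y)
    (hφ : ContDiff ℝ 1 φ) (h : IsLocalMax (fun z => v z - φ z) y) : deriv φ y = d := by
  have hφd : HasDerivAt φ (deriv φ y) y := ((hφ.differentiable one_ne_zero) y).hasDerivAt
  have h0 := h.hasDerivAt_eq_zero (hv.sub hφd)
  linarith

lemma test_deriv_eq_min {v φ : ℝ → ℝ} {d y : ℝ} (hv : HasDerivAt v d y)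
    (hφ : ContDiff ℝ 1 φ) (h : IsLocalMin (fun z => v z - φ z) y) : deriv φ y = d := by
  have hφd : HasDerivAt φ (deriv φ y) y := ((hφ.differentiable one_ne_zero) y).hasDerivAt
  have h0 := h.hasDerivAt_eq_zero (hv.sub hφd)
  linarith

lemma construction_smooth (F : ℝ → ℝ) (hFcont : Continuous F) (hFper : Function.Periodic F 1)
    (p lam : ℝ) (hlam : lam = |p| + ∫ y in (0:ℝ)..1, F y)
    (hM : ∀ y, F y ≤ lam) :
    ∃ v : ℝ → ℝ, Continuous v ∧ Function.Periodic v 1 ∧ IsPeriodicCellSolution F p lam v := by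
  obtain ⟨A, hA⟩ : ∃ A : ℝ, A = ∫ y in (0:ℝ)..1, F y := ⟨_, rfl⟩
  obtain ⟨e, he⟩ : ∃ e : ℝ, e = if 0 ≤ p then 1 else -1 := ⟨_, rfl⟩
  obtain ⟨h, hh⟩ : ∃ h : ℝ → ℝ, h = fun t => e * (lam - F t) - p := ⟨_, rfl⟩
  have hhcont : Continuous h := by
    rw [hh]; exact (continuous_const.mul (continuous_const.sub hFcont)).sub continuous_const
  have hvd : ∀ y, HasDerivAt (fun z => ∫ t in (0:ℝ)..z, h t) (h y) y := fun y =>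
    (hhcont.integral_hasStrictDerivAt 0 y).hasDerivAt
  have heabs : e * (lam - A) = p := by
    have hlA : lam - A = |p| := by rw [hlam, hA]; ring
    rcases le_or_gt 0 p with hp | hp
    · rw [he, if_pos hp, hlA, abs_of_nonneg hp]; ring
    · rw [he, if_neg (not_le.2 hp), hlA, abs_of_neg hp]; ring
  have hper : Function.Periodic h 1 := by
    intro t; rw [hh]; simp [hFper t]
  have hint1 : (∫ t in (0:ℝ)..1, h t) = 0 := by
    have h1 : (∫ t in (0:ℝ)..1, h t) = e * (lam - A) - p := by
      rw [hh]
      rw [intervalIntegral.integral_sub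
        (Continuous.intervalIntegrable (u := fun t => e * (lam - F t)) (continuous_const.mul (continuous_const.sub hFcont)) _ _)
        (intervalIntegrable_const)]
      rw [intervalIntegral.integral_const_mul]
      rw [intervalIntegral.integral_sub intervalIntegrable_const
        (hFcont.intervalIntegrable _ _)]
      simp [hA]
    rw [h1, heabs]
    ring
  refine ⟨fun z => ∫ t in (0:ℝ)..z, h t, ?_, ?_, ?_⟩
  · exact Differentiable.continuous (fun y => (hvd y).differentiableAt)
  · intro y
    have hadj : (∫ t in (0:ℝ)..y, h t) + (∫ t in y..y+1, h t) = ∫ t in (0:ℝ)..y+1, h t :=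
      integral_add_adjacent_intervals (hhcont.intervalIntegrable _ _)
        (hhcont.intervalIntegrable _ _)
    have hp1 : (∫ t in y..y+1, h t) = ∫ t in (0:ℝ)..0+1, h t :=
      hper.intervalIntegral_add_eq y 0
    simp only [zero_add] at hp1
    rw [hp1, hint1] at hadj
    show (∫ t in (0:ℝ)..y+1, h t) = ∫ t in (0:ℝ)..y, h t
    linarith
  · intro φ hφ
    have key : ∀ y₀ : ℝ, |p + h y₀| + F y₀ = lam := by
      intro y₀
      have h1 : p + h y₀ = e * (lam - F y₀) := by rw [hh]; ring
      have h2 : |e| = 1 := by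
        rcases le_or_gt 0 p with hp|hp
        · rw [he, if_pos hp]; simp
        · rw [he, if_neg (not_le.2 hp)]; simp
      rw [h1, abs_mul, h2, one_mul, abs_of_nonneg (by linarith [hM y₀])]
      ring
    constructor
    · intro y₀ hmax
      rw [test_deriv_eq_max (hvd y₀) hφ hmax]
      exact le_of_eq (key y₀)
    · intro y₀ hmin
      rw [test_deriv_eq_min (hvd y₀) hφ hmin]
      exact ge_of_eq (key y₀)

lemma periodic_fract_eq {v : ℝ → ℝ} (hp : Function.Periodic v 1) (y : ℝ) :
    v (Int.fract y) = v y := by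
  have h1 : v (y - (⌊y⌋ : ℝ) * 1) = v y := hp.sub_int_mul_eq ⌊y⌋
  rw [← Int.self_sub_floor]
  simpa [mul_one] using h1

lemma periodic_le_sSup {F : ℝ → ℝ} (hFcont : Continuous F) (hFper : Function.Periodic F 1)
    (y : ℝ) : F y ≤ sSup (F '' Icc (0:ℝ) 1) := by
  have hbdd : BddAbove (F '' Icc (0:ℝ) 1) := (isCompact_Icc.image hFcont).bddAbove
  rw [← periodic_fract_eq hFper y]
  exact le_csSup hbdd ⟨Int.fract y, ⟨Int.fract_nonneg y, (Int.fract_lt_one y).le⟩, rfl⟩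

/-- subsolution forces `F ≤ lam` pointwise -/
lemma sub_F_le {F v : ℝ → ℝ} {p lam Cv : ℝ} (hFcont : Continuous F)
    (hCv : ∀ y, |v y| ≤ Cv) (hvc : Continuous v)
    (Hsub : ∀ φ : ℝ → ℝ, ContDiff ℝ 1 φ → ∀ y₀ : ℝ,
      IsLocalMax (fun y => v y - φ y) y₀ → |p + deriv φ y₀| + F y₀ ≤ lam)
    (z : ℝ) : F z ≤ lam := by
  have hCv0 : 0 ≤ Cv := le_trans (abs_nonneg _) (hCv 0)
  have hφd : ∀ (n : ℕ) (y : ℝ),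
      HasDerivAt (fun y => ((n:ℝ)+1)*(y - z)^2) (((n:ℝ)+1)*(2*(y-z))) y := by
    intro n y
    have h1 : HasDerivAt (fun y : ℝ => (y - z)^2) (2*(y-z)) y := by
      have := ((hasDerivAt_id y).sub_const z).pow 2
      simpa [Function.comp_def, Pi.add_def, Pi.sub_def, Pi.neg_def, Pi.pow_def] using this
    simpa using h1.const_mul ((n:ℝ)+1)
  have hφc : ∀ n : ℕ, ContDiff ℝ 1 (fun y => ((n:ℝ)+1)*(y - z)^2) :=
    fun n => contDiff_const.mul ((contDiff_id.sub contDiff_const).pow 2)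
  have hex : ∀ n : ℕ, ∃ x, ∀ y, v y - ((n:ℝ)+1)*(y - z)^2 ≤ v x - ((n:ℝ)+1)*(x - z)^2 := by
    intro n
    refine exists_global_max (hvc.sub ((hφc n).continuous)) z (Cv + ((n:ℝ)+1)) ?_
    intro x
    have h1 : |x - z|^2 - 2*|x-z| + 1 ≥ 0 := by nlinarith [sq_nonneg (|x - z| - 1)]
    have h2 : (x - z)^2 = |x - z|^2 := (sq_abs _).symm
    have h3 : v x ≤ Cv := le_trans (le_abs_self _) (hCv x)
    have h4 : (1:ℝ) ≤ 2*((n:ℝ)+1) := by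
      have : (0:ℝ) ≤ (n:ℝ) := Nat.cast_nonneg n
      linarith
    have h5 : ((n:ℝ)+1)*(x-z)^2 ≥ ((n:ℝ)+1)*(2*|x-z| - 1) := by
      have := mul_le_mul_of_nonneg_left (by nlinarith : 2*|x-z| - 1 ≤ (x-z)^2)
        (by positivity : (0:ℝ) ≤ (n:ℝ)+1)
      linarith
    have h6 : ((n:ℝ)+1)*(2*|x-z| - 1) = 2*((n:ℝ)+1)*|x-z| - ((n:ℝ)+1) := by ring
    have h7 : 2*((n:ℝ)+1)*|x-z| ≥ 1*|x-z| :=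
      mul_le_mul_of_nonneg_right h4 (abs_nonneg _)
    linarith
  choose yseq hy using hex
  have hcond : ∀ n, F (yseq n) ≤ lam := by
    intro n
    have hmax : IsLocalMax (fun t => v t - ((n:ℝ)+1)*(t - z)^2) (yseq n) :=
      Filter.Eventually.of_forall (hy n)
    have h0 := Hsub _ (hφc n) (yseq n) hmax
    have habs : 0 ≤ |p + deriv (fun y => ((n:ℝ)+1)*(y - z)^2) (yseq n)| := abs_nonneg _
    linarith
  have hval : ∀ n : ℕ, ((n:ℝ)+1)*(yseq n - z)^2 ≤ 2*Cv := by
    intro n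
    have h := hy n z
    simp only [sub_self] at h
    have h1 : v z - ((n:ℝ)+1)*0^2 = v z := by ring_nf
    have h3 : -Cv ≤ v z := by have := neg_abs_le (v z); linarith [hCv z]
    have h4 : v (yseq n) ≤ Cv := le_trans (le_abs_self _) (hCv (yseq n))
    nlinarith [h]
  have hytend : Tendsto yseq atTop (𝓝 z) := by
    rw [tendsto_iff_dist_tendsto_zero]
    have hsq : ∀ n, dist (yseq n) z ≤ Real.sqrt (2*Cv / ((n:ℝ)+1)) := by
      intro n
      rw [Real.dist_eq]
      have h1 : (yseq n - z)^2 ≤ 2*Cv/((n:ℝ)+1) := by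
        rw [le_div_iff₀ (by positivity : (0:ℝ) < (n:ℝ)+1)]
        calc (yseq n - z)^2 * ((n:ℝ)+1) = ((n:ℝ)+1)*(yseq n - z)^2 := by ring
          _ ≤ 2*Cv := hval n
      calc |yseq n - z| = Real.sqrt ((yseq n - z)^2) := (Real.sqrt_sq_eq_abs _).symm
        _ ≤ Real.sqrt (2*Cv/((n:ℝ)+1)) := Real.sqrt_le_sqrt h1
    have hlim : Tendsto (fun n : ℕ => Real.sqrt (2*Cv / ((n:ℝ)+1))) atTop (𝓝 0) := by
      have hnat : Tendsto (fun n : ℕ => ((n:ℝ)+1)) atTop atTop :=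
        tendsto_atTop_add_const_right _ 1 tendsto_natCast_atTop_atTop
      have h1 : Tendsto (fun n : ℕ => 2*Cv/((n:ℝ)+1)) atTop (𝓝 0) :=
        Tendsto.div_atTop tendsto_const_nhds hnat
      exact (Real.continuous_sqrt.tendsto' 0 0 Real.sqrt_zero).comp h1
    exact squeeze_zero (fun n => dist_nonneg) hsq hlim
  have hFtend : Tendsto (fun n => F (yseq n)) atTop (𝓝 (F z)) :=
    (hFcont.tendsto z).comp hytend
  exact le_of_tendsto hFtend (Filter.Eventually.of_forall hcond)

lemma forward_le (F : ℝ → ℝ) (hFcont : Continuous F) (hFper : Function.Periodic F 1)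
    (p lam : ℝ) (v : ℝ → ℝ) (hvc : Continuous v) (hvper : Function.Periodic v 1)
    (hsol : IsPeriodicCellSolution F p lam v) :
    lam ≤ max (sSup (F '' Icc (0:ℝ) 1)) (|p| + ∫ y in (0:ℝ)..1, F y) := by
  by_contra hcon
  push_neg at hcon
  rw [max_lt_iff] at hcon
  obtain ⟨hMlt, hpAlt⟩ := hcon
  obtain ⟨A, hA⟩ : ∃ A : ℝ, A = ∫ y in (0:ℝ)..1, F y := ⟨_, rfl⟩
  rw [← hA] at hpAlt
  have hFlam : ∀ y, F y < lam := fun y =>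
    lt_of_le_of_lt (periodic_le_sSup hFcont hFper y) hMlt
  obtain ⟨Cv, hCv0, hCv⟩ := periodic_bound hvc hvper
  obtain ⟨CF, hCF0, hCF⟩ := periodic_bound hFcont hFper
  obtain ⟨u, hu⟩ : ∃ u : ℝ → ℝ, u = fun y => p*y + v y := ⟨_, rfl⟩
  have hucont : Continuous u := by
    rw [hu]; exact (continuous_const.mul continuous_id).add hvc
  -- u has no local minimum
  have hnomin : ∀ y₁ : ℝ, ¬ IsLocalMin u y₁ := by
    intro y₁ hmin
    have hφc : ContDiff ℝ 1 (fun y : ℝ => -(p*y)) :=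
      (contDiff_const.mul contDiff_id).neg
    have heq : (fun y => v y - (fun y : ℝ => -(p*y)) y) = u := by
      rw [hu]; funext t; simp; ring
    have hmin' : IsLocalMin (fun y => v y - (fun y : ℝ => -(p*y)) y) y₁ := by
      rw [heq]; exact hmin
    have h0 := (hsol _ hφc).2 y₁ hmin'
    have hd : deriv (fun y : ℝ => -(p*y)) y₁ = -p := by
      have h1 : HasDerivAt (fun y : ℝ => -(p*y)) (-p) y₁ := by
        simpa [Function.comp_def, Pi.add_def, Pi.sub_def, Pi.neg_def, Pi.pow_def] using ((hasDerivAt_id y₁).const_mul p).neg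
      exact h1.deriv
    rw [hd] at h0
    simp at h0
    exact absurd h0 (not_le.2 (hFlam y₁))
  -- the integrand bound
  have hX : ∀ y, |lam - F y| ≤ |lam| + CF := by
    intro y
    calc |lam - F y| ≤ |lam| + |F y| := abs_sub _ _
      _ ≤ |lam| + CF := by linarith [hCF y]
  have hgb : ∀ y, |lam - F y - p| ≤ |lam| + CF + |p| := by
    intro y
    calc |lam - F y - p| ≤ |lam - F y| + |p| := abs_sub _ _
      _ ≤ |lam| + CF + |p| := by linarith [hX y]
  have hgb2 : ∀ y, |-p - (lam - F y)| ≤ |lam| + CF + |p| := by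
    intro y
    calc |-p - (lam - F y)| ≤ |-p| + |lam - F y| := abs_sub _ _
      _ = |p| + |lam - F y| := by rw [abs_neg]
      _ ≤ |lam| + CF + |p| := by linarith [hX y]
  have hgcont : Continuous (fun y => lam - F y - p) :=
    (continuous_const.sub hFcont).sub continuous_const
  have hgcont2 : Continuous (fun y => -p - (lam - F y)) :=
    continuous_const.sub (continuous_const.sub hFcont)
  have hintg : (∫ y in (0:ℝ)..1, (lam - F y - p)) = lam - A - p := by
    rw [intervalIntegral.integral_sub
      (Continuous.intervalIntegrable (u := fun y => lam - F y) (continuous_const.sub hFcont) _ _) intervalIntegrable_const,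
      intervalIntegral.integral_sub intervalIntegrable_const (hFcont.intervalIntegrable _ _)]
    simp [hA]
  have hintg2 : (∫ y in (0:ℝ)..1, (-p - (lam - F y))) = -p - (lam - A) := by
    rw [intervalIntegral.integral_sub intervalIntegrable_const
      (Continuous.intervalIntegrable (u := fun y => lam - F y) (continuous_const.sub hFcont) _ _),
      intervalIntegral.integral_sub intervalIntegrable_const (hFcont.intervalIntegrable _ _)]
    simp [hA]
  have hv10 : v 1 - v 0 = 0 := by
    have := hvper 0
    simp at this
    linarith
  rcases lt_trichotomy p 0 with hp | hp | hp
  · -- p < 0 : u is nonincreasing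
    have humono : ∀ s t : ℝ, s ≤ t → u t ≤ u s := by
      intro s t hst
      by_contra hlt
      push_neg at hlt
      obtain ⟨r, hr1, hr2⟩ : ∃ r, r ≤ s ∧ u t ≤ u r := by
        obtain ⟨r, hr⟩ : ∃ r : ℝ, r = min s ((u t + Cv)/p) := ⟨_, rfl⟩
        refine ⟨r, by rw [hr]; exact min_le_left _ _, ?_⟩
        have h1 : p * ((u t + Cv)/p) = u t + Cv := by
          rw [mul_comm, div_mul_cancel₀ _ (ne_of_lt hp)]
        have h2 : r ≤ (u t + Cv)/p := by rw [hr]; exact min_le_right _ _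
        have h3 : p * ((u t + Cv)/p) ≤ p * r := mul_le_mul_of_nonpos_left h2 hp.le
        have h4 : -Cv ≤ v r := by have := neg_abs_le (v r); linarith [hCv r]
        have h5 : u r = p * r + v r := by rw [hu]
        linarith
      obtain ⟨y₂, hy₂mem, hy₂⟩ := isCompact_Icc.exists_isMinOn
        (nonempty_Icc.2 (hr1.trans hst)) hucont.continuousOn
      have h1 : u y₂ ≤ u s := hy₂ ⟨hr1, hst⟩
      have h2 : u y₂ ≤ u r := hy₂ ⟨le_refl r, hr1.trans hst⟩
      have hyr : r < y₂ := by
        rcases eq_or_lt_of_le hy₂mem.1 with h | h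
        · exfalso; rw [← h] at h1; linarith
        · exact h
      have hyt : y₂ < t := by
        rcases eq_or_lt_of_le hy₂mem.2 with h | h
        · exfalso; rw [h] at h1; linarith
        · exact h
      exact hnomin y₂ (hy₂.isLocalMin (Icc_mem_nhds hyr hyt))
    -- supersolution + monotone ⇒ deriv φ ≤ -p - (lam - F)
    have H : ∀ φ : ℝ → ℝ, ContDiff ℝ 1 φ → ∀ y₀ : ℝ,
        IsLocalMin (fun y => v y - φ y) y₀ → deriv φ y₀ ≤ (fun y => -p - (lam - F y)) y₀ := by
      intro φ hφ y₀ hmin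
      have h0 := (hsol φ hφ).2 y₀ hmin
      have hφd : HasDerivAt φ (deriv φ y₀) y₀ := ((hφ.differentiable one_ne_zero) y₀).hasDerivAt
      have hψd : HasDerivAt (fun y => p*y + φ y) (p + deriv φ y₀) y₀ := by
        have := ((hasDerivAt_id y₀).const_mul p).add hφd
        simpa [Function.comp_def, Pi.add_def, Pi.sub_def, Pi.neg_def, Pi.pow_def] using this
      have hev : ∀ᶠ x in 𝓝[>] y₀, p*x + φ x ≤ p*y₀ + φ y₀ := by
        have hminev : ∀ᶠ x in 𝓝 y₀, v y₀ - φ y₀ ≤ v x - φ x := hmin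
        filter_upwards [hminev.filter_mono nhdsWithin_le_nhds, self_mem_nhdsWithin]
          with x hx1 hx2
        have hx2' : y₀ < x := hx2
        have humx : u x ≤ u y₀ := humono y₀ x hx2'.le
        rw [hu] at humx
        simp only [] at humx
        linarith
      have h2 : p + deriv φ y₀ ≤ 0 := nonpos_of_right_le hψd hev
      have h3 : |p + deriv φ y₀| = -(p + deriv φ y₀) := abs_of_nonpos h2
      rw [h3] at h0
      simp only []
      linarith
    have hfin := visc_min_upper hvc hgcont2 hCv hgb2 H (by norm_num : (0:ℝ) ≤ 1)
    rw [hintg2, hv10] at hfin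
    have hple : |p| = -p := abs_of_neg hp
    linarith
  · -- p = 0 : v has a global minimum, contradiction
    subst hp
    obtain ⟨ym, hymmem, hym⟩ := isCompact_Icc.exists_isMinOn
      (nonempty_Icc.2 (by norm_num : (0:ℝ) ≤ 1)) hvc.continuousOn
    have hmin : IsLocalMin u ym := by
      apply Filter.Eventually.of_forall
      intro x
      rw [hu]
      simp only [zero_mul, zero_add]
      rw [← periodic_fract_eq hvper x]
      exact hym ⟨Int.fract_nonneg x, (Int.fract_lt_one x).le⟩
    exact hnomin ym hmin
  · -- p > 0 : u is nondecreasing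
    have humono : ∀ s t : ℝ, s ≤ t → u s ≤ u t := by
      intro s t hst
      by_contra hlt
      push_neg at hlt
      obtain ⟨r, hr1, hr2⟩ : ∃ r, t ≤ r ∧ u s ≤ u r := by
        obtain ⟨r, hr⟩ : ∃ r : ℝ, r = max t ((u s + Cv)/p) := ⟨_, rfl⟩
        refine ⟨r, by rw [hr]; exact le_max_left _ _, ?_⟩
        have h1 : p * ((u s + Cv)/p) = u s + Cv := by
          rw [mul_comm, div_mul_cancel₀ _ (ne_of_gt hp)]
        have h2 : (u s + Cv)/p ≤ r := by rw [hr]; exact le_max_right _ _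
        have h3 : p * ((u s + Cv)/p) ≤ p * r := mul_le_mul_of_nonneg_left h2 hp.le
        have h4 : -Cv ≤ v r := by have := neg_abs_le (v r); linarith [hCv r]
        have h5 : u r = p * r + v r := by rw [hu]
        linarith
      obtain ⟨y₂, hy₂mem, hy₂⟩ := isCompact_Icc.exists_isMinOn
        (nonempty_Icc.2 (hst.trans hr1)) hucont.continuousOn
      have h1 : u y₂ ≤ u t := hy₂ ⟨hst, hr1⟩
      have h2 : u y₂ ≤ u s := hy₂ ⟨le_refl s, hst.trans hr1⟩
      have hys : s < y₂ := by
        rcases eq_or_lt_of_le hy₂mem.1 with h | h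
        · exfalso; rw [← h] at h1; linarith
        · exact h
      have hyr : y₂ < r := by
        rcases eq_or_lt_of_le hy₂mem.2 with h | h
        · exfalso; rw [h] at h1; linarith
        · exact h
      exact hnomin y₂ (hy₂.isLocalMin (Icc_mem_nhds hys hyr))
    have H : ∀ φ : ℝ → ℝ, ContDiff ℝ 1 φ → ∀ y₀ : ℝ,
        IsLocalMin (fun y => v y - φ y) y₀ → (fun y => lam - F y - p) y₀ ≤ deriv φ y₀ := by
      intro φ hφ y₀ hmin
      have h0 := (hsol φ hφ).2 y₀ hmin
      have hφd : HasDerivAt φ (deriv φ y₀) y₀ := ((hφ.differentiable one_ne_zero) y₀).hasDerivAt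
      have hψd : HasDerivAt (fun y => p*y + φ y) (p + deriv φ y₀) y₀ := by
        have := ((hasDerivAt_id y₀).const_mul p).add hφd
        simpa [Function.comp_def, Pi.add_def, Pi.sub_def, Pi.neg_def, Pi.pow_def] using this
      have hev : ∀ᶠ x in 𝓝[<] y₀, p*x + φ x ≤ p*y₀ + φ y₀ := by
        have hminev : ∀ᶠ x in 𝓝 y₀, v y₀ - φ y₀ ≤ v x - φ x := hmin
        filter_upwards [hminev.filter_mono nhdsWithin_le_nhds, self_mem_nhdsWithin]
          with x hx1 hx2
        have hx2' : x < y₀ := hx2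
        have humx : u x ≤ u y₀ := humono x y₀ hx2'.le
        rw [hu] at humx
        simp only [] at humx
        linarith
      have h2 : 0 ≤ p + deriv φ y₀ := nonneg_of_left_le hψd hev
      have h3 : |p + deriv φ y₀| = p + deriv φ y₀ := abs_of_nonneg h2
      rw [h3] at h0
      simp only []
      linarith
    have hfin := visc_min_lower hvc hgcont hCv hgb H (by norm_num : (0:ℝ) ≤ 1)
    rw [hintg, hv10] at hfin
    have hple : |p| = p := abs_of_pos hp
    linarith

lemma construction_kink (F : ℝ → ℝ) (hFcont : Continuous F) (hFper : Function.Periodic F 1)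
    (p lam : ℝ) (y₀ : ℝ) (hy₀ : F y₀ = lam) (hM : ∀ y, F y ≤ lam)
    (hpA : |p| < lam - ∫ y in (0:ℝ)..1, F y) :
    ∃ v : ℝ → ℝ, Continuous v ∧ Function.Periodic v 1 ∧ IsPeriodicCellSolution F p lam v := by
  obtain ⟨A, hA⟩ : ∃ A : ℝ, A = ∫ y in (0:ℝ)..1, F y := ⟨_, rfl⟩
  rw [← hA] at hpA
  obtain ⟨G, hG⟩ : ∃ G : ℝ → ℝ, G = fun t => lam - F t := ⟨_, rfl⟩
  have hGcont : Continuous G := by rw [hG]; exact continuous_const.sub hFcont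
  have hG0 : ∀ t, 0 ≤ G t := fun t => by rw [hG]; simp only []; linarith [hM t]
  have hGy₀ : G y₀ = 0 := by rw [hG]; simp only []; linarith
  have hGy₁ : G (y₀ + 1) = 0 := by
    rw [hG]; simp only []
    have := hFper y₀
    linarith
  have hGper : Function.Periodic G 1 := by
    intro t; rw [hG]; simp [hFper t]
  obtain ⟨IG, hIG⟩ : ∃ IG : ℝ → ℝ, IG = fun x => ∫ t in y₀..x, G t := ⟨_, rfl⟩
  have hIGd : ∀ x, HasDerivAt IG (G x) x := fun x => by
    rw [hIG]; exact (hGcont.integral_hasStrictDerivAt y₀ x).hasDerivAt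
  have hIGcont : Continuous IG := Differentiable.continuous (fun x => (hIGd x).differentiableAt)
  have hIGy₀ : IG y₀ = 0 := by rw [hIG]; simp
  have hGint : IG (y₀ + 1) = lam - A := by
    rw [hIG]
    simp only []
    have h1 : (∫ t in y₀..y₀+1, G t) = ∫ t in (0:ℝ)..0+1, G t :=
      hGper.intervalIntegral_add_eq y₀ 0
    rw [h1]
    rw [hG]
    rw [intervalIntegral.integral_sub intervalIntegrable_const (hFcont.intervalIntegrable _ _)]
    simp [hA]
  have hIGsplit : ∀ c x : ℝ, IG x = IG c + ∫ t in c..x, G t := by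
    intro c x
    rw [hIG]; simp only []
    rw [← integral_add_adjacent_intervals (hGcont.intervalIntegrable y₀ c)
      (hGcont.intervalIntegrable c x)]
  -- find the switching point c
  have hlamA : 0 < lam - A := lt_of_le_of_lt (abs_nonneg p) hpA
  obtain ⟨c, hcmem, hcval⟩ : ∃ c ∈ Icc y₀ (y₀+1), 2 * IG c - (lam - A) = p := by
    have hΦcont : ContinuousOn (fun x => 2 * IG x - (lam - A)) (Icc y₀ (y₀+1)) :=
      ((continuous_const.mul hIGcont).sub continuous_const).continuousOn
    have hmem : p ∈ Icc ((fun x => 2 * IG x - (lam - A)) y₀) ((fun x => 2 * IG x - (lam - A)) (y₀+1)) := by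
      simp only [hIGy₀, hGint]
      constructor
      · have := neg_abs_le p; simp; linarith
      · have := le_abs_self p; simp; linarith
    have := intermediate_value_Icc (by linarith : y₀ ≤ y₀ + 1) hΦcont hmem
    obtain ⟨c, hc1, hc2⟩ := this
    exact ⟨c, hc1, hc2⟩
  have hcl : y₀ < c := by
    rcases eq_or_lt_of_le hcmem.1 with h | h
    · exfalso
      rw [← h, hIGy₀] at hcval
      have := neg_abs_le p
      linarith
    · exact h
  have hcr : c < y₀ + 1 := by
    rcases eq_or_lt_of_le hcmem.2 with h | h
    · exfalso
      rw [h, hGint] at hcval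
      have := le_abs_self p
      linarith
    · exact h
  -- the two branches
  obtain ⟨Wp, hWp⟩ : ∃ W : ℝ → ℝ, W = fun y => -p*(y - y₀) + IG y := ⟨_, rfl⟩
  obtain ⟨Wm, hWm⟩ : ∃ W : ℝ → ℝ, W = fun y => Wp c + (-p*(y - c) - ∫ t in c..y, G t) := ⟨_, rfl⟩
  have hWpd : ∀ y, HasDerivAt Wp (-p + G y) y := by
    intro y
    rw [hWp]
    have h1 : HasDerivAt (fun y : ℝ => -p*(y - y₀)) (-p) y := by
      simpa using ((hasDerivAt_id y).sub_const y₀).const_mul (-p)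
    exact h1.add (hIGd y)
  have hWmd : ∀ y, HasDerivAt Wm (-p - G y) y := by
    intro y
    rw [hWm]
    have h1 : HasDerivAt (fun y : ℝ => -p*(y - c)) (-p) y := by
      simpa using ((hasDerivAt_id y).sub_const c).const_mul (-p)
    have h2 : HasDerivAt (fun y => ∫ t in c..y, G t) (G y) y :=
      (hGcont.integral_hasStrictDerivAt c y).hasDerivAt
    have h3 := (hasDerivAt_const y (Wp c)).add (h1.sub h2)
    simpa [Function.comp_def, Pi.add_def, Pi.sub_def, Pi.neg_def, Pi.pow_def] using h3
  have hWpcont : Continuous Wp := Differentiable.continuous (fun x => (hWpd x).differentiableAt)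
  have hWmcont : Continuous Wm := Differentiable.continuous (fun x => (hWmd x).differentiableAt)
  have hdiff : ∀ y, Wm y - Wp y = -2 * ∫ t in c..y, G t := by
    intro y
    rw [hWm, hWp]
    simp only []
    have h1 : IG y = IG c + ∫ t in c..y, G t := hIGsplit c y
    rw [h1]
    ring
  have hWp0 : Wp y₀ = 0 := by rw [hWp]; simp [hIGy₀]
  have hWm1 : Wm (y₀+1) = 0 := by
    rw [hWm]
    simp only []
    have h1 : (∫ t in c..y₀+1, G t) = (lam - A) - IG c := by
      have := hIGsplit c (y₀+1)
      rw [hGint] at this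
      linarith
    have h2 : Wp c = -p*(c - y₀) + IG c := by rw [hWp]
    rw [h1, h2]
    ring_nf
    linarith
  have hWpc : Wm c = Wp c := by
    have := hdiff c
    simp at this
    linarith
  -- min representation
  have hminL : ∀ y, y ≤ c → min (Wp y) (Wm y) = Wp y := by
    intro y hy
    apply min_eq_left
    have h1 := hdiff y
    have h2 : 0 ≤ ∫ t in y..c, G t :=
      intervalIntegral.integral_nonneg hy (fun t _ => hG0 t)
    have h3 : (∫ t in c..y, G t) = -∫ t in y..c, G t := intervalIntegral.integral_symm y c
    rw [h3] at h1
    linarith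
  have hminR : ∀ y, c ≤ y → min (Wp y) (Wm y) = Wm y := by
    intro y hy
    apply min_eq_right
    have h1 := hdiff y
    have h2 : 0 ≤ ∫ t in c..y, G t :=
      intervalIntegral.integral_nonneg hy (fun t _ => hG0 t)
    linarith
  obtain ⟨vb, hvb⟩ : ∃ vb : ℝ → ℝ, vb = fun y => min (Wp y) (Wm y) := ⟨_, rfl⟩
  have hvbcont : Continuous vb := by rw [hvb]; exact hWpcont.min hWmcont
  obtain ⟨v, hv⟩ : ∃ v : ℝ → ℝ, v = fun y => vb (y₀ + Int.fract (y - y₀)) := ⟨_, rfl⟩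
  -- local representation
  have Frep : ∀ (k : ℤ) (x : ℝ), y₀ + k ≤ x → x < y₀ + k + 1 → v x = vb (x - k) := by
    intro k x h1 h2
    have hfl : ⌊x - y₀⌋ = k := by
      rw [Int.floor_eq_iff]
      constructor
      · linarith
      · push_cast; linarith
    rw [hv]
    simp only []
    rw [← Int.self_sub_floor, hfl]
    congr 1
    ring
  have hvxL : ∀ (k : ℤ) (x : ℝ), y₀ + k ≤ x → x < y₀ + k + 1 → x - k ≤ c → v x = Wp (x - k) := by
    intro k x h1 h2 h3
    rw [Frep k x h1 h2, hvb]
    exact hminL _ h3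
  have hvxR : ∀ (k : ℤ) (x : ℝ), y₀ + k ≤ x → x < y₀ + k + 1 → c ≤ x - k → v x = Wm (x - k) := by
    intro k x h1 h2 h3
    rw [Frep k x h1 h2, hvb]
    exact hminR _ h3
  have hper : Function.Periodic v 1 := by
    intro y
    rw [hv]
    simp only []
    congr 2
    have h0 : y + 1 - y₀ = (y - y₀) + ((1:ℤ):ℝ) := by push_cast; ring
    rw [h0, Int.fract_add_intCast]
  -- classification of points
  have CL : ∀ x : ℝ, (∃ k : ℤ, x = c + k) ∨
      (∃ d, HasDerivAt v d x ∧ |p + d| + F x = lam) := by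
    intro x
    obtain ⟨k, hk⟩ : ∃ k : ℤ, ⌊x - y₀⌋ = k := ⟨_, rfl⟩
    have h1 : y₀ + (k:ℝ) ≤ x := by
      have := Int.floor_le (x - y₀); rw [hk] at this; linarith
    have h2 : x < y₀ + k + 1 := by
      have := Int.lt_floor_add_one (x - y₀); rw [hk] at this; push_cast at this; linarith
    have hFx : F (x - k) = F x := by
      have h0 := hFper.sub_int_mul_eq (x := x) (n := k)
      simpa using h0
    rcases lt_trichotomy (x - (k:ℝ)) c with hxc | hxc | hxc
    · rcases eq_or_lt_of_le h1 with hlat | hint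
      · -- lattice point x = y₀ + k
        right
        have hxy : x - (k:ℝ) = y₀ := by linarith
        refine ⟨-p, ?_, ?_⟩
        · have hWpk : HasDerivAt (fun z : ℝ => Wp (z - (k:ℝ))) (-p) x := by
            have hcomp := (hWpd (x - (k:ℝ))).comp x ((hasDerivAt_id x).sub_const (k:ℝ))
            rw [hxy, hGy₀] at hcomp
            simpa [Function.comp_def, Pi.add_def, Pi.sub_def, Pi.neg_def, Pi.pow_def] using hcomp
          have hWmk : HasDerivAt (fun z : ℝ => Wm (z - (k:ℝ) + 1)) (-p) x := by
            have hin : HasDerivAt (fun z : ℝ => z - (k:ℝ) + 1) 1 x := by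
              simpa using ((hasDerivAt_id x).sub_const (k:ℝ)).add_const (1:ℝ)
            have hcomp := (hWmd (x - (k:ℝ) + 1)).comp x hin
            rw [hxy, hGy₁] at hcomp
            simpa [Function.comp_def, Pi.add_def, Pi.sub_def, Pi.neg_def, Pi.pow_def] using hcomp
          have hvx0 : v x = 0 := by
            rw [hvxL k x h1 h2 (by linarith [hcl]), hxy, hWp0]
          have hright : HasDerivWithinAt v (-p) (Ici x) x := by
            refine (hWpk.hasDerivWithinAt).congr_of_eventuallyEq ?_ ?_
            · have hmem : Ico x (c + k) ∈ 𝓝[≥] x :=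
                Ico_mem_nhdsGE_of_mem ⟨le_rfl, by linarith [hcl]⟩
              filter_upwards [hmem] with z hz
              exact hvxL k z (by linarith [hz.1]) (by linarith [hz.2, hcr]) (by linarith [hz.2])
            · rw [hvx0, hxy, hWp0]
          have hleft : HasDerivWithinAt v (-p) (Iic x) x := by
            refine (hWmk.hasDerivWithinAt).congr_of_eventuallyEq ?_ ?_
            · have hmem : Ioc (c + k - 1) x ∈ 𝓝[≤] x :=
                Ioc_mem_nhdsLE_of_mem ⟨by linarith [hcr], le_rfl⟩
              filter_upwards [hmem] with z hz
              rcases eq_or_lt_of_le hz.2 with hzx | hzx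
              · rw [hzx, hvx0, hxy, hWm1]
              · have hz1 : y₀ + ((k - 1 : ℤ):ℝ) ≤ z := by push_cast; linarith [hz.1, hcl]
                have hz2 : z < y₀ + ((k - 1 : ℤ):ℝ) + 1 := by push_cast; linarith
                have hz3 : c ≤ z - ((k-1:ℤ):ℝ) := by push_cast; linarith [hz.1]
                have := hvxR (k-1) z hz1 hz2 hz3
                rw [this]
                congr 1
                push_cast
                ring
            · rw [hvx0, hxy, hWm1]
          have huni := hleft.union hright
          rw [Iic_union_Ici] at huni
          exact huni.hasDerivAt univ_mem
        · have hFy : F x = lam := by rw [← hFx, hxy, hy₀]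
          rw [hFy]
          simp
      · -- smooth region, plus branch
        right
        refine ⟨-p + G (x - (k:ℝ)), ?_, ?_⟩
        · have hWpk : HasDerivAt (fun z : ℝ => Wp (z - (k:ℝ))) (-p + G (x - (k:ℝ))) x := by
            have hcomp := (hWpd (x - (k:ℝ))).comp x ((hasDerivAt_id x).sub_const (k:ℝ))
            simpa [Function.comp_def, Pi.add_def, Pi.sub_def, Pi.neg_def, Pi.pow_def] using hcomp
          refine hWpk.congr_of_eventuallyEq ?_
          have hmem : Ioo (y₀ + (k:ℝ)) (c + k) ∈ 𝓝 x := Ioo_mem_nhds hint (by linarith)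
          filter_upwards [hmem] with z hz
          exact hvxL k z (by linarith [hz.1]) (by linarith [hz.2, hcr]) (by linarith [hz.2])
        · have habs : |p + (-p + G (x - (k:ℝ)))| = G (x - (k:ℝ)) := by
            rw [show p + (-p + G (x - (k:ℝ))) = G (x - (k:ℝ)) by ring]
            exact abs_of_nonneg (hG0 _)
          rw [habs, ← hFx, hG]
          simp only []
          ring
    · left
      exact ⟨k, by linarith⟩
    · -- smooth region, minus branch
      right
      refine ⟨-p - G (x - (k:ℝ)), ?_, ?_⟩
      · have hWmk : HasDerivAt (fun z : ℝ => Wm (z - (k:ℝ))) (-p - G (x - (k:ℝ))) x := by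
          have hcomp := (hWmd (x - (k:ℝ))).comp x ((hasDerivAt_id x).sub_const (k:ℝ))
          simpa [Function.comp_def, Pi.add_def, Pi.sub_def, Pi.neg_def, Pi.pow_def] using hcomp
        refine hWmk.congr_of_eventuallyEq ?_
        have hmem : Ioo (c + k) (y₀ + k + 1) ∈ 𝓝 x := Ioo_mem_nhds (by linarith) h2
        filter_upwards [hmem] with z hz
        exact hvxR k z (by linarith [hz.1, hcl]) (by linarith [hz.2]) (by linarith [hz.1])
      · have habs : |p + (-p - G (x - (k:ℝ)))| = G (x - (k:ℝ)) := by
          rw [show p + (-p - G (x - (k:ℝ))) = -(G (x - (k:ℝ))) by ring, abs_neg]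
          exact abs_of_nonneg (hG0 _)
        rw [habs, ← hFx, hG]
        simp only []
        ring
  -- continuity
  have hcont : Continuous v := by
    rw [continuous_iff_continuousAt]
    intro x
    rcases CL x with ⟨k, hk⟩ | ⟨d, hd, _⟩
    · have hbase : Continuous (fun z : ℝ => vb (z - (k:ℝ))) :=
        hvbcont.comp (continuous_id.sub continuous_const)
      refine ContinuousAt.congr hbase.continuousAt ?_
      have hmem : Ioo (y₀ + (k:ℝ)) (y₀ + k + 1) ∈ 𝓝 x := by
        refine Ioo_mem_nhds ?_ ?_ <;> rw [hk] <;> [linarith [hcl]; linarith [hcr]]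
      filter_upwards [hmem] with z hz
      exact (Frep k z hz.1.le hz.2).symm
    · exact hd.differentiableAt.continuousAt
  -- kink point facts
  have hkink : ∀ (k : ℤ) (φ : ℝ → ℝ), ContDiff ℝ 1 φ →
      (IsLocalMax (fun y => v y - φ y) (c + k) → |p + deriv φ (c + k)| ≤ G c) ∧
      (IsLocalMin (fun y => v y - φ y) (c + k) → (-p + G c ≤ deriv φ (c + k) ∧ deriv φ (c + k) ≤ -p - G c)) := by
    intro k φ hφ
    obtain ⟨x, hx⟩ : ∃ x : ℝ, x = c + (k:ℝ) := ⟨_, rfl⟩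
    have hxk : x - (k:ℝ) = c := by rw [hx]; ring
    have hb1 : y₀ + (k:ℝ) ≤ x := by rw [hx]; linarith [hcl]
    have hb2 : x < y₀ + (k:ℝ) + 1 := by rw [hx]; linarith [hcr]
    have hφd : HasDerivAt φ (deriv φ x) x := ((hφ.differentiable one_ne_zero) x).hasDerivAt
    have hvalx : v x = Wp c - 0 := by
      rw [hvxL k x hb1 hb2 (le_of_eq hxk), hxk]; ring
    have hWpk : HasDerivAt (fun z : ℝ => Wp (z - (k:ℝ))) (-p + G c) x := by
      have hcomp := (hWpd (x - (k:ℝ))).comp x ((hasDerivAt_id x).sub_const (k:ℝ))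
      rw [hxk] at hcomp
      simpa [Function.comp_def, Pi.add_def, Pi.sub_def, Pi.neg_def, Pi.pow_def] using hcomp
    have hWmk : HasDerivAt (fun z : ℝ => Wm (z - (k:ℝ))) (-p - G c) x := by
      have hcomp := (hWmd (x - (k:ℝ))).comp x ((hasDerivAt_id x).sub_const (k:ℝ))
      rw [hxk] at hcomp
      simpa [Function.comp_def, Pi.add_def, Pi.sub_def, Pi.neg_def, Pi.pow_def] using hcomp
    have hgLd : HasDerivAt (fun z => Wp (z - (k:ℝ)) - φ z) ((-p + G c) - deriv φ x) x :=
      hWpk.sub hφd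
    have hgRd : HasDerivAt (fun z => Wm (z - (k:ℝ)) - φ z) ((-p - G c) - deriv φ x) x :=
      hWmk.sub hφd
    have hevL : ∀ᶠ z in 𝓝[<] x, v z = Wp (z - (k:ℝ)) := by
      have hmem : Ioo (y₀ + (k:ℝ)) x ∈ 𝓝[<] x :=
        Ioo_mem_nhdsLT_of_mem ⟨by linarith, le_rfl⟩
      filter_upwards [hmem] with z hz
      exact hvxL k z hz.1.le (by linarith [hz.2]) (by linarith [hz.2, hxk])
    have hevR : ∀ᶠ z in 𝓝[>] x, v z = Wm (z - (k:ℝ)) := by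
      have hmem : Ioo x (y₀ + (k:ℝ) + 1) ∈ 𝓝[>] x :=
        Ioo_mem_nhdsGT_of_mem ⟨le_rfl, by linarith⟩
      filter_upwards [hmem] with z hz
      exact hvxR k z (by linarith [hz.1]) hz.2 (by linarith [hz.1, hxk])
    have hgLx : Wp (x - (k:ℝ)) - φ x = v x - φ x := by rw [hxk, hvalx]; ring
    have hgRx : Wm (x - (k:ℝ)) - φ x = v x - φ x := by rw [hxk, hWpc, hvalx]; ring
    rw [← hx]
    constructor
    · intro hmax
      have hmax' : ∀ᶠ z in 𝓝 x, v z - φ z ≤ v x - φ x := hmax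
      have hL : 0 ≤ (-p + G c) - deriv φ x := by
        refine nonneg_of_left_le hgLd ?_
        filter_upwards [hevL, hmax'.filter_mono nhdsWithin_le_nhds] with z hz1 hz2
        rw [← hz1, hgLx]
        exact hz2
      have hR : (-p - G c) - deriv φ x ≤ 0 := by
        refine nonpos_of_right_le hgRd ?_
        filter_upwards [hevR, hmax'.filter_mono nhdsWithin_le_nhds] with z hz1 hz2
        rw [← hz1, hgRx]
        exact hz2
      exact abs_le.2 ⟨by linarith, by linarith⟩
    · intro hmin
      have hmin' : ∀ᶠ z in 𝓝 x, v x - φ x ≤ v z - φ z := hmin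
      have hL : 0 ≤ -(((-p + G c) - deriv φ x)) := by
        refine nonneg_of_left_le hgLd.neg ?_
        filter_upwards [hevL, hmin'.filter_mono nhdsWithin_le_nhds] with z hz1 hz2
        simp only [Pi.neg_apply]
        rw [← hz1, hgLx]
        linarith
      have hR : -(((-p - G c) - deriv φ x)) ≤ 0 := by
        refine nonpos_of_right_le hgRd.neg ?_
        filter_upwards [hevR, hmin'.filter_mono nhdsWithin_le_nhds] with z hz1 hz2
        simp only [Pi.neg_apply]
        rw [← hz1, hgRx]
        linarith
      exact ⟨by linarith, by linarith⟩
  -- assemble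

  refine ⟨v, hcont, hper, ?_⟩
  intro φ hφ
  have hFc : ∀ k : ℤ, F (c + (k:ℝ)) = F c := by
    intro k
    have h0 := hFper.sub_int_mul_eq (n := k) (x := c + (k:ℝ))
    simp at h0
    exact h0.symm
  have hGlamF : G c = lam - F c := by rw [hG]
  constructor
  · intro x hmax
    rcases CL x with ⟨k, hk⟩ | ⟨d, hd, heq⟩
    · subst hk
      have h0 := ((hkink k φ hφ).1) hmax
      rw [hFc k]
      linarith [h0]
    · rw [test_deriv_eq_max hd hφ hmax]
      exact le_of_eq heq
  · intro x hmin
    rcases CL x with ⟨k, hk⟩ | ⟨d, hd, heq⟩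
    · subst hk
      obtain ⟨hL, hR⟩ := ((hkink k φ hφ).2) hmin
      have hGc0 : G c = 0 := le_antisymm (by linarith) (hG0 c)
      have hd0 : deriv φ (c + (k:ℝ)) = -p := by
        rw [hGc0] at hL hR
        linarith
      rw [hd0, hFc k]
      rw [show p + -p = (0:ℝ) by ring]
      simp
      linarith
    · rw [test_deriv_eq_min hd hφ hmin]
      exact ge_of_eq heq


/-- for continuous 1-periodic `F` and `p, λ ∈ ℝ`, the cell problem
`|p + v'(y)| + F(y) = λ` admits a continuous 1-periodic viscosity solution if and
only if `λ = max{ max_{[0,1]} F , |p| + ∫₀¹ F }`. -/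
theorem cell_problem_solvability (F : ℝ → ℝ) (hFcont : Continuous F)
    (hFper : Function.Periodic F 1) (p lam : ℝ) :
    (∃ v : ℝ → ℝ, Continuous v ∧ Function.Periodic v 1 ∧
        IsPeriodicCellSolution F p lam v) ↔
      lam = max (sSup (F '' Icc (0 : ℝ) 1)) (|p| + ∫ y in (0 : ℝ)..1, F y) := by
  constructor
  · rintro ⟨v, hvc, hvper, hsol⟩
    obtain ⟨Cv, hCv0, hCv⟩ := periodic_bound hvc hvper
    obtain ⟨CF, hCF0, hCF⟩ := periodic_bound hFcont hFper
    obtain ⟨A, hA⟩ : ∃ A : ℝ, A = ∫ y in (0:ℝ)..1, F y := ⟨_, rfl⟩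
    have hFle : ∀ z, F z ≤ lam :=
      fun z => sub_F_le hFcont hCv hvc (fun φ hφ => (hsol φ hφ).1) z
    have hMle : sSup (F '' Icc (0:ℝ) 1) ≤ lam := by
      refine csSup_le ⟨F 0, ⟨0, by norm_num, rfl⟩⟩ ?_
      rintro x ⟨t, _, rfl⟩
      exact hFle t
    -- integral bounds from the subsolution property
    have hX : ∀ y, |lam - F y| ≤ |lam| + CF := by
      intro y
      calc |lam - F y| ≤ |lam| + |F y| := abs_sub _ _
        _ ≤ |lam| + CF := by linarith [hCF y]
    have hgb : ∀ y, |lam - F y - p| ≤ |lam| + CF + |p| := by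
      intro y
      calc |lam - F y - p| ≤ |lam - F y| + |p| := abs_sub _ _
        _ ≤ |lam| + CF + |p| := by linarith [hX y]
    have hgb2 : ∀ y, |-p - (lam - F y)| ≤ |lam| + CF + |p| := by
      intro y
      calc |-p - (lam - F y)| ≤ |-p| + |lam - F y| := abs_sub _ _
        _ = |p| + |lam - F y| := by rw [abs_neg]
        _ ≤ |lam| + CF + |p| := by linarith [hX y]
    have hgcont : Continuous (fun y => lam - F y - p) :=
      (continuous_const.sub hFcont).sub continuous_const
    have hgcont2 : Continuous (fun y => -p - (lam - F y)) :=
      continuous_const.sub (continuous_const.sub hFcont)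
    have hintg : (∫ y in (0:ℝ)..1, (lam - F y - p)) = lam - A - p := by
      rw [intervalIntegral.integral_sub
        (Continuous.intervalIntegrable (u := fun y => lam - F y) (continuous_const.sub hFcont) _ _) intervalIntegrable_const,
        intervalIntegral.integral_sub intervalIntegrable_const (hFcont.intervalIntegrable _ _)]
      simp [hA]
    have hintg2 : (∫ y in (0:ℝ)..1, (-p - (lam - F y))) = -p - (lam - A) := by
      rw [intervalIntegral.integral_sub intervalIntegrable_const
        (Continuous.intervalIntegrable (u := fun y => lam - F y) (continuous_const.sub hFcont) _ _),
        intervalIntegral.integral_sub intervalIntegrable_const (hFcont.intervalIntegrable _ _)]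
      simp [hA]
    have hv10 : v 1 - v 0 = 0 := by
      have := hvper 0
      simp at this
      linarith
    have H1 : ∀ φ : ℝ → ℝ, ContDiff ℝ 1 φ → ∀ y₀ : ℝ,
        IsLocalMax (fun y => v y - φ y) y₀ → deriv φ y₀ ≤ (fun y => lam - F y - p) y₀ := by
      intro φ hφ y₀ hmax
      have h0 := (hsol φ hφ).1 y₀ hmax
      have h1 := le_abs_self (p + deriv φ y₀)
      simp only []
      linarith
    have H2 : ∀ φ : ℝ → ℝ, ContDiff ℝ 1 φ → ∀ y₀ : ℝ,
        IsLocalMax (fun y => v y - φ y) y₀ → (fun y => -p - (lam - F y)) y₀ ≤ deriv φ y₀ := by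
      intro φ hφ y₀ hmax
      have h0 := (hsol φ hφ).1 y₀ hmax
      have h1 := neg_abs_le (p + deriv φ y₀)
      simp only []
      linarith
    have hb1 := visc_upper hvc hgcont hCv hgb H1 (by norm_num : (0:ℝ) ≤ 1)
    have hb2 := visc_upper' hvc hgcont2 hCv hgb2 H2 (by norm_num : (0:ℝ) ≤ 1)
    rw [hintg, hv10] at hb1
    rw [hintg2, hv10] at hb2
    have hpabs : |p| ≤ lam - A := abs_le.2 ⟨by linarith, by linarith⟩
    have hge : max (sSup (F '' Icc (0:ℝ) 1)) (|p| + ∫ y in (0:ℝ)..1, F y) ≤ lam := by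
      refine max_le hMle ?_
      rw [← hA]
      linarith
    have hle := forward_le F hFcont hFper p lam v hvc hvper hsol
    exact le_antisymm hle hge
  · intro hlam
    rcases le_or_gt (sSup (F '' Icc (0:ℝ) 1)) (|p| + ∫ y in (0:ℝ)..1, F y) with hle | hlt
    · have h1 : lam = |p| + ∫ y in (0:ℝ)..1, F y := by rw [hlam, max_eq_right hle]
      refine construction_smooth F hFcont hFper p lam h1 ?_
      intro y
      calc F y ≤ sSup (F '' Icc (0:ℝ) 1) := periodic_le_sSup hFcont hFper y
        _ ≤ |p| + ∫ y in (0:ℝ)..1, F y := hle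
        _ = lam := h1.symm
    · have h1 : lam = sSup (F '' Icc (0:ℝ) 1) := by rw [hlam, max_eq_left hlt.le]
      obtain ⟨y₀, hy₀mem, hy₀⟩ := isCompact_Icc.exists_sSup_image_eq
        (nonempty_Icc.2 (by norm_num : (0:ℝ) ≤ 1)) hFcont.continuousOn
      refine construction_kink F hFcont hFper p lam y₀ ?_ ?_ ?_
      · rw [← hy₀, ← h1]
      · intro y
        rw [h1]
        exact periodic_le_sSup hFcont hFper y
      · rw [h1]
        linarith [hlt]
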